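/- Let n ≥ 3 and suppose M is a linear subspace of the symmetric n×n matrices over K containing X·Xᵀ for every X ∈ Kⁿ outside a fixed one-dimensional subspace K·X₀ where X₀ = (1,…,1)ᵀ. Then M equals the full space of symmetric n×n matrices. -/

import Mathlib

open Matrix

/-- If a subspace of the symmetric `n×n` matrices (`n ≥ 3`) contains `X·Xᵀ` for
every `X` outside the line spanned by the all-ones vector, then it is the full
space of symmetric matrices. -/
theorem subspace_containing_almost_all_squares_is_full
    (K : Type*) [Field K] (n : ℕ) (hn : 3 ≤ n)
    (M : Submodule K (Matrix (Fin n) (Fin n) K))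
    (hMsym : ∀ A ∈ M, A.IsSymm)
    (hsq : ∀ X : Fin n → K,
      X ∉ Submodule.span K {(fun _ => 1 : Fin n → K)} → vecMulVec X X ∈ M) :
    ∀ A : Matrix (Fin n) (Fin n) K, A.IsSymm → A ∈ M := by
  -- there is always an element avoiding any two given indices
  have hex : ∀ i j : Fin n, ∃ k : Fin n, k ≠ i ∧ k ≠ j := by
    intro i j
    by_contra hcon
    push_neg at hcon
    have hsub : (Finset.univ : Finset (Fin n)) ⊆ {i, j} := by
      intro k _
      simp only [Finset.mem_insert, Finset.mem_singleton]
      by_cases hk : k = i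
      · exact Or.inl hk
      · exact Or.inr (hcon k hk)
    have h1 := Finset.card_le_card hsub
    have h2 : ({i, j} : Finset (Fin n)).card ≤ 2 :=
      (Finset.card_insert_le _ _).trans (by simp)
    rw [Finset.card_univ, Fintype.card_fin] at h1
    omega
  -- a non-constant vector is not in the span of the all-ones vector
  have hns : ∀ X : Fin n → K, (∃ k l : Fin n, X k ≠ X l) →
      X ∉ Submodule.span K {(fun _ => 1 : Fin n → K)} := by
    rintro X ⟨k, l, hkl⟩ hmem
    rw [Submodule.mem_span_singleton] at hmem
    obtain ⟨c, hc⟩ := hmem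
    have hk := congrFun hc k
    have hl := congrFun hc l
    simp only [Pi.smul_apply, smul_eq_mul, mul_one] at hk hl
    exact hkl (by rw [← hk, ← hl])
  -- the diagonal elementary matrices are in M
  have hEii : ∀ i : Fin n, Matrix.single i i (1 : K) ∈ M := by
    intro i
    rw [Matrix.single_eq_single_vecMulVec_single]
    apply hsq
    apply hns
    obtain ⟨k, hk, -⟩ := hex i i
    exact ⟨i, k, by simp [Pi.single_apply, hk]⟩
  -- the symmetrized off-diagonal elementary matrices are in M
  have hEij : ∀ i j : Fin n, i ≠ j →
      Matrix.single i j (1 : K) + Matrix.single j i 1 ∈ M := by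
    intro i j hij
    have hXM : vecMulVec ((Pi.single i 1 + Pi.single j 1 : Fin n → K))
        ((Pi.single i 1 + Pi.single j 1 : Fin n → K)) ∈ M := by
      apply hsq
      apply hns
      obtain ⟨k, hk1, hk2⟩ := hex i j
      refine ⟨i, k, ?_⟩
      simp [Pi.single_apply, hij, hk1, hk2]
    have hdecomp : vecMulVec ((Pi.single i 1 + Pi.single j 1 : Fin n → K))
        ((Pi.single i 1 + Pi.single j 1 : Fin n → K))
          = Matrix.single i i 1 + Matrix.single j j 1 +
            (Matrix.single i j 1 + Matrix.single j i 1) := by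
      ext a b
      simp only [vecMulVec_apply, Pi.add_apply, Pi.single_apply, Matrix.add_apply,
        Matrix.single, of_apply]
      by_cases hai : a = i <;> by_cases haj : a = j <;> by_cases hbi : b = i <;>
        by_cases hbj : b = j <;> simp_all [eq_comm]
    have := M.sub_mem (M.sub_mem hXM (hEii i)) (hEii j)
    rw [hdecomp] at this
    convert this using 1
    abel
  intro A hA
  have hrep : A = (∑ i : Fin n, Matrix.single i i (A i i)) +
      ∑ p ∈ Finset.univ.filter (fun p : Fin n × Fin n => p.1 < p.2),
        A p.1 p.2 • (Matrix.single p.1 p.2 (1:K) + Matrix.single p.2 p.1 1) := by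
    ext a b
    simp only [Matrix.add_apply, Matrix.sum_apply, Matrix.smul_apply, Matrix.single, of_apply,
      smul_eq_mul, mul_add, Finset.sum_filter,
      apply_ite (fun M : Matrix (Fin n) (Fin n) K => M a b), Matrix.zero_apply]
    rcases lt_trichotomy a b with h | h | h
    · have h1 : (∑ x : Fin n, if x = a ∧ x = b then A x x else 0) = 0 :=
        Finset.sum_eq_zero (fun x _ => by rw [if_neg]; rintro ⟨rfl, rfl⟩; exact absurd rfl h.ne)
      rw [h1, Finset.sum_eq_single ((a, b) : Fin n × Fin n)]
      · simp [h, h.ne, h.ne']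
      · rintro ⟨c1, c2⟩ - hne
        by_cases hlt : c1 < c2
        · rw [if_pos hlt, if_neg, if_neg]
          · ring
          · rintro ⟨rfl, rfl⟩; exact absurd hlt (asymm h)
          · rintro ⟨rfl, rfl⟩; exact hne rfl
        · rw [if_neg hlt]
      · intro hmem; exact absurd (Finset.mem_univ _) hmem
    · subst h
      have h2 : (∑ x : Fin n × Fin n, if x.1 < x.2 then
          ((A x.1 x.2 * if x.1 = a ∧ x.2 = a then 1 else 0) +
            A x.1 x.2 * if x.2 = a ∧ x.1 = a then 1 else 0) else 0) = 0 := by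
        refine Finset.sum_eq_zero fun c _ => ?_
        by_cases hlt : c.1 < c.2
        · rw [if_pos hlt, if_neg, if_neg]
          · simp
          · rintro ⟨h1, h2⟩; rw [h1, h2] at hlt; exact absurd hlt (lt_irrefl _)
          · rintro ⟨h1, h2⟩; rw [h1, h2] at hlt; exact absurd hlt (lt_irrefl _)
        · rw [if_neg hlt]
      rw [h2]
      simp [Finset.sum_ite_eq']
    · have h1 : (∑ x : Fin n, if x = a ∧ x = b then A x x else 0) = 0 :=
        Finset.sum_eq_zero (fun x _ => by rw [if_neg]; rintro ⟨rfl, rfl⟩; exact absurd rfl h.ne')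
      rw [h1, Finset.sum_eq_single ((b, a) : Fin n × Fin n)]
      · simp [h, h.ne, h.ne', hA.apply]
      · rintro ⟨c1, c2⟩ - hne
        by_cases hlt : c1 < c2
        · rw [if_pos hlt, if_neg, if_neg]
          · ring
          · rintro ⟨rfl, rfl⟩; exact hne rfl
          · rintro ⟨rfl, rfl⟩; exact absurd hlt (asymm h)
        · rw [if_neg hlt]
      · intro hmem; exact absurd (Finset.mem_univ _) hmem
  rw [hrep]
  refine M.add_mem (Submodule.sum_mem _ fun i _ => ?_) (Submodule.sum_mem _ fun p hp => ?_)
  · have : Matrix.single i i (A i i) = A i i • Matrix.single i i (1 : K) := by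
      rw [Matrix.smul_single, smul_eq_mul, mul_one]
    rw [this]
    exact M.smul_mem _ (hEii i)
  · exact M.smul_mem _ (hEij p.1 p.2 (Finset.mem_filter.mp hp).2.ne)
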